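/- Let q be a prime power. The number of 5-element sets of lines in the projective plane ℙ² over 𝔽_q such that there is exactly one point of ℙ² lying on three of the five lines, and no point lies on four or more of the lines, equals (1/12)·(q−2)·q³·(q³−1)·(q²−1). -/

import Mathlib

open scoped Classical
open Module Submodule

section helpers
variable {α β : Type*}

/-- If every fiber of `f` has `Nat.card` equal to `k`, then `card α = k * card β`. -/
lemma card_of_fibers [Fintype α] [Fintype β] (f : α → β) (k : ℕ)
    (h : ∀ b : β, Nat.card {a : α // f a = b} = k) :
    Nat.card α = k * Nat.card β := by
  simp only [Nat.card_eq_fintype_card] at *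
  rw [Fintype.card_congr (Equiv.sigmaFiberEquiv f).symm, Fintype.card_sigma]
  simp [h, Finset.sum_const, mul_comm]

lemma card_step {p : α → Prop} {r : α → β → Prop} [Fintype α] [Fintype β] (k : ℕ)
    (h : ∀ a : α, p a → Nat.card {b : β // r a b} = k) :
    Nat.card {z : α × β // p z.1 ∧ r z.1 z.2} = k * Nat.card {a : α // p a} := by
  refine card_of_fibers (fun z => ⟨z.1.1, z.2.1⟩) k ?_
  rintro ⟨a, ha⟩
  rw [← h a ha]
  refine Nat.card_congr ?_
  refine ⟨fun z => ⟨z.1.1.2, ?_⟩, fun b => ⟨⟨⟨a, b.1⟩, ⟨ha, b.2⟩⟩, rfl⟩, ?_, ?_⟩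
  · obtain ⟨⟨⟨a', b⟩, hz⟩, hfa⟩ := z
    have : a' = a := congrArg Subtype.val hfa
    subst this
    exact hz.2
  · rintro ⟨⟨⟨a', b⟩, hz⟩, hfa⟩
    have : a' = a := congrArg Subtype.val hfa
    subst this
    rfl
  · rintro ⟨b, hb⟩; rfl

lemma card_subtype_and_ne [Fintype α] {p : α → Prop} (a : α) (ha : p a) :
    Nat.card {x : α // p x ∧ x ≠ a} + 1 = Nat.card {x : α // p x} := by
  classical
  simp only [Nat.card_eq_fintype_card, Fintype.card_subtype]
  have : (Finset.univ.filter p) = insert a (Finset.univ.filter fun x => p x ∧ x ≠ a) := by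
    ext x
    by_cases hx : x = a <;> simp [hx, ha]
  rw [this, Finset.card_insert_of_notMem (by simp)]

lemma card_subtype_partition [Fintype α] (p r : α → Prop) :
    Nat.card {x : α // p x ∧ r x} + Nat.card {x : α // p x ∧ ¬ r x}
      = Nat.card {x : α // p x} := by
  classical
  simp only [Nat.card_eq_fintype_card, Fintype.card_subtype]
  rw [← Finset.card_union_of_disjoint (by
      simp only [Finset.disjoint_left, Finset.mem_filter]
      rintro x ⟨-, -, hr⟩ ⟨-, -, hnr⟩
      exact hnr hr)]
  congr 1
  ext x
  by_cases h : r x <;> simp [h]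

end helpers
section arith
lemma aux_cancel {q n m : ℕ} (hq : 2 ≤ q) (key : m * (q-1) = n * (q-1)) : m = n :=
  Nat.eq_of_mul_eq_mul_right (by omega) key

lemma aux2 {q n : ℕ} (hq : 2 ≤ q) (h : n * (q-1) = q^2 - 1) : n = q + 1 := by
  refine aux_cancel hq (h.trans ?_).symm |>.symm
  obtain ⟨m, rfl⟩ : ∃ m, q = m + 2 := ⟨q - 2, by omega⟩
  rw [show m+2-1 = m+1 from rfl, show (m+2)^2 = m^2+4*m+4 from by ring,
    show m^2+4*m+4-1 = m^2+4*m+3 from by omega]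
  ring

lemma aux3 {q n : ℕ} (hq : 2 ≤ q) (h : n * (q-1) = q^3 - 1) : n = q^2 + q + 1 := by
  refine aux_cancel hq (h.trans ?_).symm |>.symm
  obtain ⟨m, rfl⟩ : ∃ m, q = m + 2 := ⟨q - 2, by omega⟩
  rw [show m+2-1 = m+1 from rfl, show (m+2)^3 = m^3+6*m^2+12*m+8 from by ring,
    show m^3+6*m^2+12*m+8-1 = m^3+6*m^2+12*m+7 from by omega]
  ring
end arith

section geom
variable {F : Type} [Field F] [Fintype F]

local notation "q" => Fintype.card F

lemma card_points_mul (W : Type) [AddCommGroup W] [Module F W] [Fintype W]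
    [FiniteDimensional F W] :
    Nat.card {P : Submodule F W // finrank F P = 1} * (q - 1) = Fintype.card W - 1 := by
  have hfib : ∀ P : {P : Submodule F W // finrank F P = 1},
      Nat.card {v : {v : W // v ≠ 0} // (⟨span F {v.1}, finrank_span_singleton v.2⟩ :
        {P : Submodule F W // finrank F P = 1}) = P} = q - 1 := by
    rintro ⟨P, hP⟩
    have e : {v : {v : W // v ≠ 0} // (⟨span F {v.1}, finrank_span_singleton v.2⟩ :
        {P : Submodule F W // finrank F P = 1}) = ⟨P, hP⟩} ≃ {x : P // x ≠ 0} :=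
      { toFun := fun v => ⟨⟨v.1.1, by
          have h : span F {(v.1.1 : W)} = P := congrArg Subtype.val v.2
          exact h.le (mem_span_singleton_self _)⟩, by
          simp only [ne_eq, Submodule.mk_eq_zero]; exact v.1.2⟩
        invFun := fun x => ⟨⟨x.1.1, fun h => x.2 (ZeroMemClass.coe_eq_zero.mp h)⟩, by
          apply Subtype.ext
          show span F {(x.1.1 : W)} = P
          refine Submodule.eq_of_le_of_finrank_le (span_le.2 (by simpa using x.1.2)) ?_
          rw [hP, finrank_span_singleton
            (show (x.1.1 : W) ≠ 0 from fun h => x.2 (ZeroMemClass.coe_eq_zero.mp h))]⟩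
        left_inv := fun v => Subtype.ext (Subtype.ext rfl)
        right_inv := fun x => Subtype.ext (Subtype.ext rfl) }
    rw [Nat.card_congr e]
    rw [show (fun x : P => x ≠ 0) = fun x : P => ¬ x = 0 from rfl]
    have h1 : Nat.card {x : P // ¬ x = 0} = Fintype.card P - Nat.card {x : P // x = 0} := by
      simp only [Nat.card_eq_fintype_card]
      rw [Fintype.card_subtype_compl]
    have h2 : Nat.card {x : P // x = 0} = 1 := by
      simp only [Nat.card_eq_fintype_card]
      exact Fintype.card_subtype_eq (0 : P)
    have h3 : Fintype.card P = q ^ 1 := by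
      rw [card_eq_pow_finrank (K := F) (V := P), hP]
    rw [h1, h2, h3, pow_one]
  have key := card_of_fibers (α := {v : W // v ≠ 0})
    (fun v => (⟨span F {v.1}, finrank_span_singleton v.2⟩ :
      {P : Submodule F W // finrank F P = 1})) (q - 1) hfib
  rw [mul_comm] at key
  rw [← key]
  rw [show (fun v : W => v ≠ 0) = fun v : W => ¬ v = 0 from rfl]
  have h1 : Nat.card {v : W // ¬ v = 0} = Fintype.card W - Nat.card {v : W // v = 0} := by
    simp only [Nat.card_eq_fintype_card]; rw [Fintype.card_subtype_compl]
  have h2 : Nat.card {v : W // v = 0} = 1 := by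
    simp only [Nat.card_eq_fintype_card]; exact Fintype.card_subtype_eq (0 : W)
  rw [h1, h2]

lemma card_points_of_finrank {W : Type} [AddCommGroup W] [Module F W] [Fintype W]
    [FiniteDimensional F W] (hq : 2 ≤ q) {n : ℕ} (hW : finrank F W = n) :
    Nat.card {P : Submodule F W // finrank F P = 1} * (q - 1) = q ^ n - 1 := by
  rw [card_points_mul W, card_eq_pow_finrank (K := F) (V := W), hW]
end geom
section geom2
variable {F : Type} [Field F] [Fintype F]
local notation "q" => Fintype.card F
local notation "V" => (Fin 3 → F)
local notation "rk" => finrank F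

lemma finrank_V : finrank F V = 3 := by simp

lemma card_points (hq : 2 ≤ q) :
    Nat.card {P : Submodule F V // finrank F P = 1} = q^2 + q + 1 := by
  letI : Fintype V := inferInstance
  exact aux3 hq (card_points_of_finrank hq finrank_V)

set_option synthInstance.maxHeartbeats 1000000 in
/-- Lines through a fixed point. -/
lemma card_lines_through (hq : 2 ≤ q) (P : Submodule F V) (hP : finrank F P = 1) :
    Nat.card {L : Submodule F V // finrank F L = 2 ∧ P ≤ L} = q + 1 := by
  letI : Fintype (V ⧸ P) := Fintype.ofFinite _
  have hq2 : finrank F (V ⧸ P) = 2 := by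
    have := Submodule.finrank_quotient_add_finrank P
    rw [hP, finrank_V] at this; omega
  -- rank-nullity for the restriction of mkQ
  have hrank : ∀ L : Submodule F V, P ≤ L →
      finrank F (Submodule.map P.mkQ L) + 1 = finrank F L := by
    intro L hPL
    have h1 : LinearMap.range (P.mkQ.comp L.subtype) = Submodule.map P.mkQ L := by
      rw [LinearMap.range_comp, Submodule.range_subtype]
    have h2 : LinearMap.ker (P.mkQ.comp L.subtype) = Submodule.comap L.subtype P := by
      rw [LinearMap.ker_comp, Submodule.ker_mkQ]
    have h3 := LinearMap.finrank_range_add_finrank_ker (P.mkQ.comp L.subtype)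
    rw [h1, h2] at h3
    have h4 : finrank F (Submodule.comap L.subtype P) = finrank F P :=
      (Submodule.comapSubtypeEquivOfLe hPL).finrank_eq
    rw [hP] at h4
    omega
  have e : {L : Submodule F V // finrank F L = 2 ∧ P ≤ L} ≃
      {Wq : Submodule F (V ⧸ P) // finrank F Wq = 1} :=
    { toFun := fun L => ⟨Submodule.map P.mkQ L.1, by
        have := hrank L.1 L.2.2
        rw [L.2.1] at this; omega⟩
      invFun := fun Wq => ⟨Submodule.comap P.mkQ Wq.1, by
        have hle : P ≤ Submodule.comap P.mkQ Wq.1 := by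
          intro x hx
          have hx0 : P.mkQ x = 0 := (Submodule.Quotient.mk_eq_zero P).2 hx
          simpa [Submodule.mem_comap, hx0] using Wq.1.zero_mem
        have hmap : Submodule.map P.mkQ (Submodule.comap P.mkQ Wq.1) = Wq.1 :=
          Submodule.map_comap_eq_of_surjective (Submodule.mkQ_surjective P) _
        have := hrank _ hle
        rw [hmap, Wq.2] at this
        exact ⟨this.symm, hle⟩⟩
      left_inv := fun L => by
        apply Subtype.ext
        show Submodule.comap P.mkQ (Submodule.map P.mkQ L.1) = L.1
        rw [Submodule.comap_map_eq, Submodule.ker_mkQ, sup_eq_left.2 L.2.2]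
      right_inv := fun Wq => by
        apply Subtype.ext
        exact Submodule.map_comap_eq_of_surjective (Submodule.mkQ_surjective P) _ }
  rw [Nat.card_congr e]
  exact aux2 hq (card_points_of_finrank hq hq2)

/-- Total number of lines. -/
lemma card_lines (hq : 2 ≤ q) :
    Nat.card {L : Submodule F V // finrank F L = 2} = q^2 + q + 1 := by
  letI : Finite (Module.Dual F V) :=
    Finite.of_injective (fun f => (f : V → F)) DFunLike.coe_injective
  letI : Fintype (Module.Dual F V) := Fintype.ofFinite _
  have hdim : finrank F (Module.Dual F V) = 3 := by
    rw [Subspace.dual_finrank_eq, finrank_V]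
  have hann : ∀ L : Submodule F V, finrank F L.dualAnnihilator + finrank F L = 3 := by
    intro L
    have h1 : finrank F L.dualAnnihilator = finrank F (V ⧸ L) :=
      ((Subspace.quotEquivAnnihilator L).finrank_eq).symm
    rw [h1, Submodule.finrank_quotient_add_finrank, finrank_V]
  have e : {L : Submodule F V // finrank F L = 2} ≃
      {Φ : Submodule F (Module.Dual F V) // finrank F Φ = 1} :=
    { toFun := fun L => ⟨L.1.dualAnnihilator, by have := hann L.1; rw [L.2] at this; omega⟩
      invFun := fun Φ => ⟨Φ.1.dualCoannihilator, by
        have := Subspace.finrank_add_finrank_dualCoannihilator_eq Φ.1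
        rw [Φ.2, finrank_V] at this; omega⟩
      left_inv := fun L => Subtype.ext Subspace.dualAnnihilator_dualCoannihilator_eq
      right_inv := fun Φ => by
        apply Subtype.ext
        have hle := Submodule.le_dualCoannihilator_dualAnnihilator Φ.1
        have h1 := Subspace.finrank_add_finrank_dualCoannihilator_eq Φ.1
        rw [Φ.2, finrank_V] at h1
        have h2 := hann Φ.1.dualCoannihilator
        refine (Submodule.eq_of_le_of_finrank_le hle ?_).symm
        rw [Φ.2]; omega }
  rw [Nat.card_congr e]
  exact aux3 hq (card_points_of_finrank hq hdim)
end geom2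
section geom3
variable {F : Type} [Field F] [Fintype F]
local notation "q" => Fintype.card F
local notation "V" => (Fin 3 → F)

lemma finrank_inf_lines {L₁ L₂ : Submodule F V} (h1 : finrank F L₁ = 2)
    (h2 : finrank F L₂ = 2) (hne : L₁ ≠ L₂) : finrank F (L₁ ⊓ L₂ : Submodule F V) = 1 := by
  have hs := Submodule.finrank_sup_add_finrank_inf_eq L₁ L₂
  have hle : finrank F (L₁ ⊔ L₂ : Submodule F V) ≤ 3 := by
    have := Submodule.finrank_le (L₁ ⊔ L₂)
    rw [finrank_V] at this
    exact this
  have h3 : ¬ finrank F (L₁ ⊔ L₂ : Submodule F V) ≤ 2 := by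
    intro hc
    have e1 : L₁ = L₁ ⊔ L₂ :=
      Submodule.eq_of_le_of_finrank_le le_sup_left (by omega)
    have e2 : L₂ = L₁ ⊔ L₂ :=
      Submodule.eq_of_le_of_finrank_le le_sup_right (by omega)
    exact hne (e1.trans e2.symm)
  omega

lemma point_eq_of_le {P R : Submodule F V} (hP : finrank F P = 1) (hR : finrank F R = 1)
    (h : R ≤ P) : R = P :=
  Submodule.eq_of_le_of_finrank_le h (by omega)

/-- if R is a rank-1 inside two distinct lines both containing P (rank 1), then R = P -/
lemma point_eq_of_two_lines {P R L₁ L₂ : Submodule F V} (hP : finrank F P = 1)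
    (hR : finrank F R = 1) (h1 : finrank F L₁ = 2) (h2 : finrank F L₂ = 2) (hne : L₁ ≠ L₂)
    (hP1 : P ≤ L₁) (hP2 : P ≤ L₂) (hR1 : R ≤ L₁) (hR2 : R ≤ L₂) : R = P := by
  have hinf := finrank_inf_lines h1 h2 hne
  have hPinf : P = L₁ ⊓ L₂ :=
    Submodule.eq_of_le_of_finrank_le (le_inf hP1 hP2) (by omega)
  have hRinf : R = L₁ ⊓ L₂ :=
    Submodule.eq_of_le_of_finrank_le (le_inf hR1 hR2) (by omega)
  rw [hRinf, ← hPinf]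

lemma finrank_sup_points {P Q : Submodule F V} (hP : finrank F P = 1) (hQ : finrank F Q = 1)
    (hne : P ≠ Q) : finrank F (P ⊔ Q : Submodule F V) = 2 := by
  have hs := Submodule.finrank_sup_add_finrank_inf_eq P Q
  have hle : finrank F (P ⊓ Q : Submodule F V) ≤ 1 := by
    have := Submodule.finrank_mono (inf_le_left : P ⊓ Q ≤ P)
    omega
  have : ¬ finrank F (P ⊓ Q : Submodule F V) = 1 := by
    intro hc
    have e1 : P ⊓ Q = P := Submodule.eq_of_le_of_finrank_le inf_le_left (by omega)
    have e2 : P ⊓ Q = Q := Submodule.eq_of_le_of_finrank_le inf_le_right (by omega)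
    exact hne (e1.symm.trans e2)
  omega

lemma line_eq_sup_of_two_points {P Q L : Submodule F V} (hP : finrank F P = 1)
    (hQ : finrank F Q = 1) (hne : P ≠ Q) (hL : finrank F L = 2) (h1 : P ≤ L) (h2 : Q ≤ L) :
    L = P ⊔ Q := by
  have := finrank_sup_points hP hQ hne
  exact (Submodule.eq_of_le_of_finrank_le (sup_le h1 h2) (by omega)).symm

/-- exactly one line through two distinct points -/
lemma card_lines_through_two {P Q : Submodule F V} (hP : finrank F P = 1)
    (hQ : finrank F Q = 1) (hne : P ≠ Q) :
    Nat.card {L : Submodule F V // finrank F L = 2 ∧ Q ≤ L ∧ P ≤ L} = 1 := by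
  rw [Nat.card_eq_one_iff_unique]
  constructor
  · constructor
    rintro ⟨L, hL, hQL, hPL⟩ ⟨L', hL', hQL', hPL'⟩
    apply Subtype.ext
    show L = L'
    rw [line_eq_sup_of_two_points hP hQ hne hL hPL hQL,
      line_eq_sup_of_two_points hP hQ hne hL' hPL' hQL']
  · exact ⟨⟨P ⊔ Q, finrank_sup_points hP hQ hne, le_sup_right, le_sup_left⟩⟩

/-- lines through Q but not through P : count q -/
lemma card_lines_through_not_through (hq : 2 ≤ q) {P Q : Submodule F V}
    (hP : finrank F P = 1) (hQ : finrank F Q = 1) (hne : P ≠ Q) :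
    Nat.card {L : Submodule F V // (finrank F L = 2 ∧ Q ≤ L) ∧ ¬ P ≤ L} = q := by
  letI : Fintype (Submodule F V) := Fintype.ofFinite _
  have hpart := card_subtype_partition (fun L : Submodule F V => finrank F L = 2 ∧ Q ≤ L)
    (fun L => P ≤ L)
  have h1 : Nat.card {L : Submodule F V // (finrank F L = 2 ∧ Q ≤ L) ∧ P ≤ L} = 1 := by
    rw [← card_lines_through_two hP hQ hne]
    exact Nat.card_congr (Equiv.subtypeEquivRight (by tauto))
  have h2 := card_lines_through hq Q hQ
  omega

/-- lines not through P : count q^2 -/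
lemma card_lines_not_through (hq : 2 ≤ q) {P : Submodule F V} (hP : finrank F P = 1) :
    Nat.card {L : Submodule F V // finrank F L = 2 ∧ ¬ P ≤ L} = q^2 := by
  letI : Fintype (Submodule F V) := Fintype.ofFinite _
  have hpart := card_subtype_partition (fun L : Submodule F V => finrank F L = 2)
    (fun L => P ≤ L)
  have h1 : Nat.card {L : Submodule F V // finrank F L = 2 ∧ P ≤ L} = q + 1 :=
    card_lines_through hq P hP
  have h2 := card_lines (F := F) hq
  have h3 : 1 ≤ q := by omega
  have : Nat.card {L : Submodule F V // finrank F L = 2 ∧ ¬ P ≤ L}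
      = (q^2 + q + 1) - (q + 1) := by omega
  rw [this]
  have : q^2 + q + 1 - (q + 1) = q^2 := by omega
  rw [this]
end geom3
section geom4
variable {F : Type} [Field F] [Fintype F]
local notation "q" => Fintype.card F
local notation "V" => (Fin 3 → F)

lemma natcard_filter (p : Submodule F V → Prop) [DecidablePred p] [Fintype (Submodule F V)] :
    Nat.card {L : Submodule F V // p L} = (Finset.univ.filter p).card := by
  rw [Nat.card_eq_fintype_card, Fintype.card_subtype]

lemma card_fifth_line (hq : 2 ≤ q) {P L₁ L₂ L₃ L₄ : Submodule F V}
    (hP : finrank F P = 1) (h1 : finrank F L₁ = 2) (h2 : finrank F L₂ = 2)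
    (h3 : finrank F L₃ = 2) (h4 : finrank F L₄ = 2)
    (hP1 : P ≤ L₁) (hP2 : P ≤ L₂) (hP3 : P ≤ L₃)
    (h12 : L₁ ≠ L₂) (h13 : L₁ ≠ L₃) (h23 : L₂ ≠ L₃) (hP4 : ¬ P ≤ L₄) :
    Nat.card {L : Submodule F V // finrank F L = 2 ∧ ¬ P ≤ L ∧
      ¬ L₄ ⊓ L₁ ≤ L ∧ ¬ L₄ ⊓ L₂ ≤ L ∧ ¬ L₄ ⊓ L₃ ≤ L} = (q - 1) * (q - 2) := by
  letI : Fintype (Submodule F V) := Fintype.ofFinite _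
  have hne4 : ∀ {L : Submodule F V}, finrank F L = 2 → P ≤ L → L₄ ≠ L :=
    fun h hPL e => hP4 (e ▸ hPL)
  have hQ : ∀ {L : Submodule F V}, finrank F L = 2 → P ≤ L →
      finrank F (L₄ ⊓ L : Submodule F V) = 1 :=
    fun h hPL => finrank_inf_lines h4 h (hne4 h hPL)
  have hQ1 : finrank F (L₄ ⊓ L₁ : Submodule F V) = 1 := hQ h1 hP1
  have hQ2 : finrank F (L₄ ⊓ L₂ : Submodule F V) = 1 := hQ h2 hP2
  have hQ3 : finrank F (L₄ ⊓ L₃ : Submodule F V) = 1 := hQ h3 hP3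
  have hQP : ∀ {L : Submodule F V}, finrank F L = 2 → P ≤ L → P ≠ L₄ ⊓ L := by
    intro L h hPL e
    exact hP4 (e ▸ inf_le_left)
  have hQQ : ∀ {La Lb : Submodule F V}, finrank F La = 2 → finrank F Lb = 2 →
      P ≤ La → P ≤ Lb → La ≠ Lb → L₄ ⊓ La ≠ L₄ ⊓ Lb := by
    intro La Lb ha hb hPa hPb hab e
    have : L₄ ⊓ La = P := by
      refine point_eq_of_two_lines hP (hQ ha hPa) ha hb hab hPa hPb inf_le_right ?_
      rw [e]; exact inf_le_right
    exact hQP ha hPa this.symm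
  -- Finsets
  set U : Finset (Submodule F V) :=
    Finset.univ.filter (fun L => finrank F L = 2 ∧ ¬ P ≤ L) with hU
  set S₁ : Finset (Submodule F V) :=
    Finset.univ.filter (fun L => (finrank F L = 2 ∧ ¬ P ≤ L) ∧ L₄ ⊓ L₁ ≤ L) with hS1
  set S₂ : Finset (Submodule F V) :=
    Finset.univ.filter (fun L => (finrank F L = 2 ∧ ¬ P ≤ L) ∧ L₄ ⊓ L₂ ≤ L) with hS2
  set S₃ : Finset (Submodule F V) :=
    Finset.univ.filter (fun L => (finrank F L = 2 ∧ ¬ P ≤ L) ∧ L₄ ⊓ L₃ ≤ L) with hS3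
  have cardU : U.card = q^2 := by
    rw [hU]
    exact ((natcard_filter _).symm.trans (card_lines_not_through hq hP))
  have cardS : ∀ (L : Submodule F V) (hL : finrank F L = 2) (hPL : P ≤ L)
      (S : Finset (Submodule F V)), S = Finset.univ.filter
        (fun M : Submodule F V => (finrank F M = 2 ∧ ¬ P ≤ M) ∧ L₄ ⊓ L ≤ M) → S.card = q := by
    intro L hL hPL S hS
    rw [hS]
    refine ((natcard_filter _).symm.trans ?_)
    rw [← card_lines_through_not_through hq hP (hQ hL hPL) (hQP hL hPL)]
    exact Nat.card_congr (Equiv.subtypeEquivRight (by tauto))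
  have cS1 : S₁.card = q := cardS L₁ h1 hP1 _ hS1
  have cS2 : S₂.card = q := cardS L₂ h2 hP2 _ hS2
  have cS3 : S₃.card = q := cardS L₃ h3 hP3 _ hS3
  -- pairwise intersections are {L₄}
  have hL4mem : ∀ {La : Submodule F V}, finrank F La = 2 → P ≤ La → L₄ ⊓ La ≤ L₄ :=
    fun _ _ => inf_le_left
  have hinter : ∀ (La Lb : Submodule F V), finrank F La = 2 → finrank F Lb = 2 →
      P ≤ La → P ≤ Lb → La ≠ Lb →
      (Finset.univ.filter (fun M : Submodule F V => (finrank F M = 2 ∧ ¬ P ≤ M) ∧ L₄ ⊓ La ≤ M)) ∩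
      (Finset.univ.filter (fun M : Submodule F V => (finrank F M = 2 ∧ ¬ P ≤ M) ∧ L₄ ⊓ Lb ≤ M)) = ({L₄} : Finset (Submodule F V)) := by
    intro La Lb ha hb hPa hPb hab
    ext M
    simp only [Finset.mem_inter, Finset.mem_filter, Finset.mem_univ, true_and,
      Finset.mem_singleton]
    constructor
    · rintro ⟨⟨⟨hM2, hMP⟩, hMa⟩, ⟨-, hMb⟩⟩
      rw [line_eq_sup_of_two_points (hQ ha hPa) (hQ hb hPb) (hQQ ha hb hPa hPb hab) hM2 hMa hMb]
      exact (line_eq_sup_of_two_points (hQ ha hPa) (hQ hb hPb) (hQQ ha hb hPa hPb hab) h4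
        inf_le_left inf_le_left).symm
    · rintro rfl
      exact ⟨⟨⟨h4, hP4⟩, inf_le_left⟩, ⟨⟨h4, hP4⟩, inf_le_left⟩⟩
  have i12 : S₁ ∩ S₂ = {L₄} := hinter L₁ L₂ h1 h2 hP1 hP2 h12
  have i13 : S₁ ∩ S₃ = {L₄} := hinter L₁ L₃ h1 h3 hP1 hP3 h13
  have i23 : S₂ ∩ S₃ = {L₄} := hinter L₂ L₃ h2 h3 hP2 hP3 h23
  -- union card
  have c12 : (S₁ ∪ S₂).card = 2*q - 1 := by
    have := Finset.card_union_add_card_inter S₁ S₂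
    rw [i12, cS1, cS2, Finset.card_singleton] at this
    omega
  have cu : (S₁ ∪ S₂ ∪ S₃).card = 3*q - 2 := by
    have h := Finset.card_union_add_card_inter (S₁ ∪ S₂) S₃
    have hdist : (S₁ ∪ S₂) ∩ S₃ = {L₄} := by
      rw [Finset.union_inter_distrib_right, i13, i23, Finset.union_self]
    rw [hdist, Finset.card_singleton, c12, cS3] at h
    omega
  -- final count
  have hsub : S₁ ∪ S₂ ∪ S₃ ⊆ U := by
    intro M hM
    simp only [hU, hS1, hS2, hS3, Finset.mem_union, Finset.mem_filter] at hM ⊢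
    tauto
  have hfin : Finset.univ.filter (fun L : Submodule F V => finrank F L = 2 ∧ ¬ P ≤ L ∧
      ¬ L₄ ⊓ L₁ ≤ L ∧ ¬ L₄ ⊓ L₂ ≤ L ∧ ¬ L₄ ⊓ L₃ ≤ L) = U \ (S₁ ∪ S₂ ∪ S₃) := by
    ext M
    simp only [hU, hS1, hS2, hS3, Finset.mem_sdiff, Finset.mem_union, Finset.mem_filter,
      Finset.mem_univ, true_and]
    tauto
  rw [natcard_filter _, hfin, Finset.card_sdiff_of_subset hsub, cardU, cu]
  obtain ⟨m, hm⟩ : ∃ m, q = m + 2 := ⟨q - 2, by omega⟩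
  rw [hm, show (m+2)^2 = m^2+4*m+4 from by ring, show m+2-1 = m+1 from rfl,
    show m+2-2 = m from by omega]
  have hms : m^2 = m*m := by ring
  rw [hms, show (m+1)*m = m*m+m from by ring]
  omega
end geom4
section tuples
variable {γ : Type*} [Fintype γ]

lemma card_ne_one (a : γ) : Nat.card {x : γ // x ≠ a} + 1 = Fintype.card γ := by
  have h := card_subtype_and_ne (p := fun _ : γ => True) a trivial
  beta_reduce at h
  have e1 : Nat.card {x : γ // True ∧ x ≠ a} = Nat.card {x : γ // x ≠ a} :=
    Nat.card_congr (Equiv.subtypeEquivRight (by tauto))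
  have e2 : Nat.card {x : γ // True} = Fintype.card γ := by
    rw [Nat.card_congr (Equiv.subtypeUnivEquiv (fun _ => trivial)), Nat.card_eq_fintype_card]
  omega

lemma card_subtype_and_ne2 {p : γ → Prop} (a b : γ) (ha : p a) (hb : p b) (hab : a ≠ b) :
    Nat.card {x : γ // p x ∧ x ≠ a ∧ x ≠ b} + 2 = Nat.card {x : γ // p x} := by
  have h1 := card_subtype_and_ne (p := fun x => p x ∧ x ≠ b) a ⟨ha, hab⟩
  have h2 := card_subtype_and_ne (p := p) b hb
  beta_reduce at h1 h2
  have e : Nat.card {x : γ // (p x ∧ x ≠ b) ∧ x ≠ a} =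
      Nat.card {x : γ // p x ∧ x ≠ a ∧ x ≠ b} :=
    Nat.card_congr (Equiv.subtypeEquivRight (by tauto))
  omega

lemma card_ordered_pairs : Nat.card {z : γ × γ // True ∧ z.2 ≠ z.1} =
    (Fintype.card γ - 1) * Fintype.card γ := by
  have := card_step (p := fun _ : γ => True) (r := fun a b => b ≠ a) (Fintype.card γ - 1)
    (fun a _ => by have := card_ne_one a; beta_reduce; omega)
  rw [this]
  congr 1
  rw [Nat.card_congr (Equiv.subtypeUnivEquiv (fun _ => trivial)), Nat.card_eq_fintype_card]

lemma card_ordered_triples : Nat.card {z : (γ × γ) × γ //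
    (True ∧ z.1.2 ≠ z.1.1) ∧ (z.2 ≠ z.1.1 ∧ z.2 ≠ z.1.2)} =
    (Fintype.card γ - 2) * ((Fintype.card γ - 1) * Fintype.card γ) := by
  have := card_step (p := fun z : γ × γ => True ∧ z.2 ≠ z.1)
    (r := fun z c => c ≠ z.1 ∧ c ≠ z.2) (Fintype.card γ - 2)
    (fun z hz => by
      have h := card_subtype_and_ne2 (p := fun _ : γ => True) z.1 z.2 trivial trivial
        (fun e => hz.2 e.symm)
      beta_reduce at h ⊢
      have e1 : Nat.card {x : γ // True ∧ x ≠ z.1 ∧ x ≠ z.2} =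
          Nat.card {x : γ // x ≠ z.1 ∧ x ≠ z.2} :=
        Nat.card_congr (Equiv.subtypeEquivRight (by tauto))
      have e2 : Nat.card {x : γ // True} = Fintype.card γ := by
        rw [Nat.card_congr (Equiv.subtypeUnivEquiv (fun _ => trivial)), Nat.card_eq_fintype_card]
      omega)
  rw [this, card_ordered_pairs]
end tuples
section cfg
variable (F : Type) [Field F] [Fintype F]
local notation "q" => Fintype.card F
local notation "V" => (Fin 3 → F)
local notation "Sub" => Submodule F (Fin 3 → F)

def Lvl1 : Sub → Prop := fun P => finrank F P = 1
def R1 : Sub → Sub → Prop := fun P L => finrank F L = 2 ∧ P ≤ L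
def Lvl2 : Sub × Sub → Prop := fun z => Lvl1 F z.1 ∧ R1 F z.1 z.2
def R2 : Sub × Sub → Sub → Prop := fun z L => R1 F z.1 L ∧ L ≠ z.2
def Lvl3 : (Sub × Sub) × Sub → Prop := fun z => Lvl2 F z.1 ∧ R2 F z.1 z.2
def R3 : (Sub × Sub) × Sub → Sub → Prop := fun z L => R1 F z.1.1 L ∧ L ≠ z.1.2 ∧ L ≠ z.2
def Lvl4 : ((Sub × Sub) × Sub) × Sub → Prop := fun z => Lvl3 F z.1 ∧ R3 F z.1 z.2
def R4 : ((Sub × Sub) × Sub) × Sub → Sub → Prop := fun z L => finrank F L = 2 ∧ ¬ z.1.1.1 ≤ L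
def Lvl5 : (((Sub × Sub) × Sub) × Sub) × Sub → Prop := fun z => Lvl4 F z.1 ∧ R4 F z.1 z.2
def R5 : (((Sub × Sub) × Sub) × Sub) × Sub → Sub → Prop := fun z L =>
  finrank F L = 2 ∧ ¬ z.1.1.1.1 ≤ L ∧
    ¬ z.2 ⊓ z.1.1.1.2 ≤ L ∧ ¬ z.2 ⊓ z.1.1.2 ≤ L ∧ ¬ z.2 ⊓ z.1.2 ≤ L
def Cfg := {z : ((((Sub × Sub) × Sub) × Sub) × Sub) × Sub // Lvl5 F z.1 ∧ R5 F z.1 z.2}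

lemma card_Cfg (hq : 2 ≤ q) :
    Nat.card (Cfg F) =
      ((q-1) * (q-2)) * (q^2 * ((q-1) * (q * ((q+1) * (q^2+q+1))))) := by
  letI : Fintype Sub := Fintype.ofFinite _
  have N1 : Nat.card {P : Sub // Lvl1 F P} = q^2+q+1 := card_points hq
  have N2 : Nat.card {z : Sub × Sub // Lvl2 F z} = (q+1) * (q^2+q+1) := by
    have h := card_step (p := Lvl1 F) (r := R1 F) (q+1) ?_
    · exact h.trans (by rw [N1])
    · intro P hP
      exact card_lines_through hq P hP
  have N3 : Nat.card {z : (Sub × Sub) × Sub // Lvl3 F z} = q * ((q+1) * (q^2+q+1)) := by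
    have h := card_step (p := Lvl2 F) (r := R2 F) q ?_
    · exact h.trans (by rw [N2])
    · rintro ⟨P, L₁⟩ ⟨hP, hL₁⟩
      have key := card_subtype_and_ne (p := R1 F P) L₁ hL₁
      have hc : Nat.card {L : Sub // R1 F P L} = q + 1 := card_lines_through hq P hP
      have he : Nat.card {L : Sub // R2 F (P, L₁) L} =
          Nat.card {x : Sub // R1 F P x ∧ x ≠ L₁} :=
        Nat.card_congr (Equiv.subtypeEquivRight (fun L => Iff.rfl))
      omega
  have N4 : Nat.card {z : ((Sub × Sub) × Sub) × Sub // Lvl4 F z} =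
      (q-1) * (q * ((q+1) * (q^2+q+1))) := by
    have h := card_step (p := Lvl3 F) (r := R3 F) (q-1) ?_
    · exact h.trans (by rw [N3])
    · rintro ⟨⟨P, L₁⟩, L₂⟩ ⟨⟨hP, hL₁⟩, hL₂, hne21⟩
      have key := card_subtype_and_ne2 (p := R1 F P) L₁ L₂ hL₁ hL₂ (fun e => hne21 e.symm)
      have hc : Nat.card {L : Sub // R1 F P L} = q + 1 := card_lines_through hq P hP
      have he : Nat.card {L : Sub // R3 F ((P, L₁), L₂) L} =
          Nat.card {x : Sub // R1 F P x ∧ x ≠ L₁ ∧ x ≠ L₂} :=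
        Nat.card_congr (Equiv.subtypeEquivRight (fun L => Iff.rfl))
      omega
  have N5 : Nat.card {z : (((Sub × Sub) × Sub) × Sub) × Sub // Lvl5 F z} =
      q^2 * ((q-1) * (q * ((q+1) * (q^2+q+1)))) := by
    have h := card_step (p := Lvl4 F) (r := R4 F) (q^2) ?_
    · exact h.trans (by rw [N4])
    · rintro ⟨⟨⟨P, L₁⟩, L₂⟩, L₃⟩ ⟨⟨⟨hP, -⟩, -⟩, -⟩
      exact card_lines_not_through hq hP
  have h := card_step (p := Lvl5 F) (r := R5 F) ((q-1) * (q-2)) ?_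
  · exact h.trans (by rw [N5])
  · rintro ⟨⟨⟨⟨P, L₁⟩, L₂⟩, L₃⟩, L₄⟩ hz
    obtain ⟨⟨⟨⟨hP, h1, hP1⟩, ⟨h2, hP2⟩, hne21⟩, ⟨h3, hP3⟩, hne31, hne32⟩, h4, hP4⟩ := hz
    exact card_fifth_line hq hP h1 h2 h3 h4 hP1 hP2 hP3
      (fun e => hne21 e.symm) (fun e => hne31 e.symm) (fun e => hne32 e.symm) hP4
end cfg
section keylem
variable {F : Type} [Field F] [Fintype F]
local notation "q" => Fintype.card F
local notation "V" => (Fin 3 → F)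
local notation "Sub" => Submodule F (Fin 3 → F)

/-- In the configuration, any rank-1 subspace lying on three distinct lines of the five
must be `P`. -/
lemma key_triple {P L₁ L₂ L₃ L₄ L₅ : Sub}
    (hP : finrank F P = 1)
    (h1 : finrank F L₁ = 2) (h2 : finrank F L₂ = 2) (h3 : finrank F L₃ = 2)
    (h4 : finrank F L₄ = 2) (h5 : finrank F L₅ = 2)
    (hP1 : P ≤ L₁) (hP2 : P ≤ L₂) (hP3 : P ≤ L₃)
    (hne21 : L₂ ≠ L₁) (hne31 : L₃ ≠ L₁) (hne32 : L₃ ≠ L₂)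
    (hP4 : ¬ P ≤ L₄) (hP5 : ¬ P ≤ L₅)
    (hQ1 : ¬ L₄ ⊓ L₁ ≤ L₅) (hQ2 : ¬ L₄ ⊓ L₂ ≤ L₅) (hQ3 : ¬ L₄ ⊓ L₃ ≤ L₅)
    {R M₁ M₂ M₃ : Sub} (hR : finrank F R = 1)
    (hM₁ : M₁ ∈ ({L₁, L₂, L₃, L₄, L₅} : Finset Sub))
    (hM₂ : M₂ ∈ ({L₁, L₂, L₃, L₄, L₅} : Finset Sub))
    (hM₃ : M₃ ∈ ({L₁, L₂, L₃, L₄, L₅} : Finset Sub))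
    (h12 : M₁ ≠ M₂) (h13 : M₁ ≠ M₃) (h23 : M₂ ≠ M₃)
    (hR1 : R ≤ M₁) (hR2 : R ≤ M₂) (hR3 : R ≤ M₃) : R = P := by
  have hne45 : L₄ ≠ L₅ := fun e => hQ1 (e ▸ inf_le_left)
  set t : Finset Sub := {M₁, M₂, M₃} with ht
  have htcard : t.card = 3 := by
    rw [ht, Finset.card_insert_of_notMem (by simp [h12, h13]),
      Finset.card_insert_of_notMem (by simp [h23]), Finset.card_singleton]
  have htR : ∀ M ∈ t, R ≤ M := by
    intro M hM
    rw [ht] at hM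
    simp only [Finset.mem_insert, Finset.mem_singleton] at hM
    rcases hM with rfl | rfl | rfl <;> assumption
  have htS : ∀ M ∈ t, M ∈ ({L₁, L₂, L₃, L₄, L₅} : Finset Sub) := by
    intro M hM
    rw [ht] at hM
    simp only [Finset.mem_insert, Finset.mem_singleton] at hM
    rcases hM with rfl | rfl | rfl <;> assumption
  have top_facts : ∀ M ∈ ({L₁, L₂, L₃} : Finset Sub), finrank F M = 2 ∧ P ≤ M := by
    intro M hM
    simp only [Finset.mem_insert, Finset.mem_singleton] at hM
    rcases hM with rfl | rfl | rfl <;> exact ⟨by assumption, by assumption⟩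
  set u : Finset Sub := t ∩ {L₁, L₂, L₃} with hu
  set v : Finset Sub := t ∩ {L₄, L₅} with hv
  have huv : t ⊆ u ∪ v := by
    intro M hM
    have hMS := htS M hM
    simp only [Finset.mem_insert, Finset.mem_singleton] at hMS
    rw [hu, hv]
    simp only [Finset.mem_union, Finset.mem_inter, Finset.mem_insert, Finset.mem_singleton]
    tauto
  have hcard3 : 3 ≤ u.card + v.card := by
    have hh1 := Finset.card_le_card huv
    have hh2 := Finset.card_union_le u v
    omega
  have hvle : v.card ≤ 2 := by
    have h := Finset.card_le_card (Finset.inter_subset_right (s₁ := t) (s₂ := {L₄, L₅}))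
    rwa [Finset.card_pair hne45] at h
  by_cases hu2 : 2 ≤ u.card
  · obtain ⟨a, ha, b, hb, hab⟩ := Finset.one_lt_card.mp hu2
    rw [hu] at ha hb
    have hat := Finset.mem_of_mem_inter_left ha
    have hbt := Finset.mem_of_mem_inter_left hb
    have ⟨ha2, haP⟩ := top_facts a (Finset.mem_of_mem_inter_right ha)
    have ⟨hb2, hbP⟩ := top_facts b (Finset.mem_of_mem_inter_right hb)
    exact point_eq_of_two_lines hP hR ha2 hb2 hab haP hbP (htR a hat) (htR b hbt)
  · have hv2 : 2 ≤ v.card := by omega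
    have hveq : v = {L₄, L₅} := by
      refine Finset.eq_of_subset_of_card_le Finset.inter_subset_right ?_
      rw [Finset.card_pair hne45]; omega
    have h4t : L₄ ∈ t := by
      have : L₄ ∈ v := by rw [hveq]; simp
      exact Finset.mem_of_mem_inter_left this
    have h5t : L₅ ∈ t := by
      have : L₅ ∈ v := by rw [hveq]; simp
      exact Finset.mem_of_mem_inter_left this
    have hu1 : 1 ≤ u.card := by omega
    obtain ⟨a, ha⟩ := Finset.card_pos.mp hu1
    rw [hu] at ha
    have hat := Finset.mem_of_mem_inter_left ha
    have hatop : a ∈ ({L₁, L₂, L₃} : Finset Sub) := Finset.mem_of_mem_inter_right ha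
    have ⟨ha2, haP⟩ := top_facts a hatop
    have ha4 : L₄ ≠ a := fun e => hP4 (e ▸ haP)
    have hQa : finrank F (L₄ ⊓ a : Sub) = 1 := finrank_inf_lines h4 ha2 ha4
    have hRa : R = L₄ ⊓ a :=
      Submodule.eq_of_le_of_finrank_le (le_inf (htR L₄ h4t) (htR a hat)) (by omega)
    have hle5 : L₄ ⊓ a ≤ L₅ := hRa ▸ htR L₅ h5t
    simp only [Finset.mem_insert, Finset.mem_singleton] at hatop
    rcases hatop with rfl | rfl | rfl
    · exact absurd hle5 hQ1
    · exact absurd hle5 hQ2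
    · exact absurd hle5 hQ3
end keylem
section spec
variable {F : Type} [Field F] [Fintype F]
local notation "q" => Fintype.card F
local notation "V" => (Fin 3 → F)
local notation "Sub" => Submodule F (Fin 3 → F)

lemma main_spec {P L₁ L₂ L₃ L₄ L₅ : Sub}
    (hP : finrank F P = 1)
    (h1 : finrank F L₁ = 2) (h2 : finrank F L₂ = 2) (h3 : finrank F L₃ = 2)
    (h4 : finrank F L₄ = 2) (h5 : finrank F L₅ = 2)
    (hP1 : P ≤ L₁) (hP2 : P ≤ L₂) (hP3 : P ≤ L₃)
    (hne21 : L₂ ≠ L₁) (hne31 : L₃ ≠ L₁) (hne32 : L₃ ≠ L₂)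
    (hP4 : ¬ P ≤ L₄) (hP5 : ¬ P ≤ L₅)
    (hQ1 : ¬ L₄ ⊓ L₁ ≤ L₅) (hQ2 : ¬ L₄ ⊓ L₂ ≤ L₅) (hQ3 : ¬ L₄ ⊓ L₃ ≤ L₅) :
    (({L₁, L₂, L₃, L₄, L₅} : Finset Sub).card = 5 ∧
      (∀ L ∈ ({L₁, L₂, L₃, L₄, L₅} : Finset Sub), finrank F L = 2) ∧
      (∃! R : Sub, finrank F R = 1 ∧
        ∃ M₁ ∈ ({L₁, L₂, L₃, L₄, L₅} : Finset Sub),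
        ∃ M₂ ∈ ({L₁, L₂, L₃, L₄, L₅} : Finset Sub),
        ∃ M₃ ∈ ({L₁, L₂, L₃, L₄, L₅} : Finset Sub),
          M₁ ≠ M₂ ∧ M₁ ≠ M₃ ∧ M₂ ≠ M₃ ∧ R ≤ M₁ ∧ R ≤ M₂ ∧ R ≤ M₃) ∧
      ¬ ∃ R : Sub, finrank F R = 1 ∧
        ∃ M₁ ∈ ({L₁, L₂, L₃, L₄, L₅} : Finset Sub),
        ∃ M₂ ∈ ({L₁, L₂, L₃, L₄, L₅} : Finset Sub),
        ∃ M₃ ∈ ({L₁, L₂, L₃, L₄, L₅} : Finset Sub),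
        ∃ M₄ ∈ ({L₁, L₂, L₃, L₄, L₅} : Finset Sub),
          M₁ ≠ M₂ ∧ M₁ ≠ M₃ ∧ M₁ ≠ M₄ ∧ M₂ ≠ M₃ ∧ M₂ ≠ M₄ ∧ M₃ ≠ M₄ ∧
          R ≤ M₁ ∧ R ≤ M₂ ∧ R ≤ M₃ ∧ R ≤ M₄) := by
  have hne45 : L₄ ≠ L₅ := fun e => hQ1 (e ▸ inf_le_left)
  have hne14 : L₁ ≠ L₄ := fun e => hP4 (e ▸ hP1)
  have hne24 : L₂ ≠ L₄ := fun e => hP4 (e ▸ hP2)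
  have hne34 : L₃ ≠ L₄ := fun e => hP4 (e ▸ hP3)
  have hne15 : L₁ ≠ L₅ := fun e => hP5 (e ▸ hP1)
  have hne25 : L₂ ≠ L₅ := fun e => hP5 (e ▸ hP2)
  have hne35 : L₃ ≠ L₅ := fun e => hP5 (e ▸ hP3)
  have hmemP : ∀ M ∈ ({L₁, L₂, L₃, L₄, L₅} : Finset Sub), P ≤ M → M = L₁ ∨ M = L₂ ∨ M = L₃ := by
    intro M hM hPM
    simp only [Finset.mem_insert, Finset.mem_singleton] at hM
    rcases hM with rfl | rfl | rfl | rfl | rfl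
    · exact Or.inl rfl
    · exact Or.inr (Or.inl rfl)
    · exact Or.inr (Or.inr rfl)
    · exact absurd hPM hP4
    · exact absurd hPM hP5
  refine ⟨?_, ?_, ?_, ?_⟩
  · rw [Finset.card_insert_of_notMem (by
        simp [hne21.symm, hne31.symm, hne14, hne15]),
      Finset.card_insert_of_notMem (by simp [hne32.symm, hne24, hne25]),
      Finset.card_insert_of_notMem (by simp [hne34, hne35]),
      Finset.card_insert_of_notMem (by simp [hne45]), Finset.card_singleton]
  · intro L hL
    simp only [Finset.mem_insert, Finset.mem_singleton] at hL
    rcases hL with rfl | rfl | rfl | rfl | rfl <;> assumption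
  · refine ⟨P, ⟨hP, L₁, by simp, L₂, by simp, L₃, by simp,
      hne21.symm, hne31.symm, hne32.symm, hP1, hP2, hP3⟩, ?_⟩
    rintro R ⟨hR, M₁, hM₁, M₂, hM₂, M₃, hM₃, h12, h13, h23, hR1, hR2, hR3⟩
    exact key_triple hP h1 h2 h3 h4 h5 hP1 hP2 hP3 hne21 hne31 hne32 hP4 hP5 hQ1 hQ2 hQ3
      hR hM₁ hM₂ hM₃ h12 h13 h23 hR1 hR2 hR3
  · rintro ⟨R, hR, M₁, hM₁, M₂, hM₂, M₃, hM₃, M₄, hM₄,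
      h12, h13, h14, h23, h24, h34, hR1, hR2, hR3, hR4⟩
    have hRP : R = P := key_triple hP h1 h2 h3 h4 h5 hP1 hP2 hP3 hne21 hne31 hne32 hP4 hP5
      hQ1 hQ2 hQ3 hR hM₁ hM₂ hM₃ h12 h13 h23 hR1 hR2 hR3
    subst hRP
    have hm : ∀ M, M ∈ ({L₁, L₂, L₃, L₄, L₅} : Finset Sub) → R ≤ M →
        M ∈ ({L₁, L₂, L₃} : Finset Sub) := by
      intro M hM hRM
      rcases hmemP M hM hRM with rfl | rfl | rfl <;> simp
    have hsub : ({M₁, M₂, M₃, M₄} : Finset Sub) ⊆ ({L₁, L₂, L₃} : Finset Sub) := by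
      intro M hM
      simp only [Finset.mem_insert, Finset.mem_singleton] at hM
      rcases hM with rfl | rfl | rfl | rfl
      · exact hm _ hM₁ hR1
      · exact hm _ hM₂ hR2
      · exact hm _ hM₃ hR3
      · exact hm _ hM₄ hR4
    have hc4 : ({M₁, M₂, M₃, M₄} : Finset Sub).card = 4 := by
      rw [Finset.card_insert_of_notMem (by simp [h12, h13, h14]),
        Finset.card_insert_of_notMem (by simp [h23, h24]),
        Finset.card_insert_of_notMem (by simp [h34]), Finset.card_singleton]
    have hc3 : ({L₁, L₂, L₃} : Finset Sub).card ≤ 3 := by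
      have a := Finset.card_insert_le L₁ ({L₂, L₃} : Finset Sub)
      have b := Finset.card_insert_le L₂ ({L₃} : Finset Sub)
      have c := Finset.card_singleton L₃
      omega
    have := Finset.card_le_card hsub
    omega
end spec
section fiber
variable {F : Type} [Field F] [Fintype F]
local notation "q" => Fintype.card F
local notation "V" => (Fin 3 → F)
local notation "Sub" => Submodule F (Fin 3 → F)

noncomputable def toSet (a : Cfg F) : Finset (Submodule F (Fin 3 → F)) :=
  {a.1.1.1.1.1.2, a.1.1.1.1.2, a.1.1.1.2, a.1.1.2, a.1.2}

lemma fiber_card (S : Finset (Submodule F (Fin 3 → F)))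
    (hcard : S.card = 5) (hrk : ∀ L ∈ S, finrank F L = 2)
    (hex : ∃! R : Sub, finrank F R = 1 ∧
      ∃ M₁ ∈ S, ∃ M₂ ∈ S, ∃ M₃ ∈ S,
        M₁ ≠ M₂ ∧ M₁ ≠ M₃ ∧ M₂ ≠ M₃ ∧ R ≤ M₁ ∧ R ≤ M₂ ∧ R ≤ M₃)
    (hno4 : ¬ ∃ R : Sub, finrank F R = 1 ∧
      ∃ M₁ ∈ S, ∃ M₂ ∈ S, ∃ M₃ ∈ S, ∃ M₄ ∈ S,
        M₁ ≠ M₂ ∧ M₁ ≠ M₃ ∧ M₁ ≠ M₄ ∧ M₂ ≠ M₃ ∧ M₂ ≠ M₄ ∧ M₃ ≠ M₄ ∧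
        R ≤ M₁ ∧ R ≤ M₂ ∧ R ≤ M₃ ∧ R ≤ M₄) :
    Nat.card {a : Cfg F // toSet a = S} = 12 := by
  classical
  obtain ⟨P₀, ⟨hP₀, N₁, hN₁S, N₂, hN₂S, N₃, hN₃S, hn12, hn13, hn23, hPN₁, hPN₂, hPN₃⟩,
    huniq⟩ := hex
  set T : Finset Sub := S.filter (fun L => P₀ ≤ L) with hT
  have hmemT : ∀ L : Sub, L ∈ T ↔ L ∈ S ∧ P₀ ≤ L := by
    intro L; rw [hT, Finset.mem_filter]
  have hNT : ({N₁, N₂, N₃} : Finset Sub) ⊆ T := by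
    intro M hM
    simp only [Finset.mem_insert, Finset.mem_singleton] at hM
    rcases hM with rfl | rfl | rfl <;> rw [hmemT]
    · exact ⟨hN₁S, hPN₁⟩
    · exact ⟨hN₂S, hPN₂⟩
    · exact ⟨hN₃S, hPN₃⟩
  have hNcard : ({N₁, N₂, N₃} : Finset Sub).card = 3 := by
    rw [Finset.card_insert_of_notMem (by simp [hn12, hn13]),
      Finset.card_insert_of_notMem (by simp [hn23]), Finset.card_singleton]
  have hTcard : T.card = 3 := by
    have h3le : 3 ≤ T.card := by
      have := Finset.card_le_card hNT
      omega
    by_contra hne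
    have h4le : 4 ≤ T.card := by omega
    have hsd : 1 ≤ (T \ {N₁, N₂, N₃}).card := by
      have := Finset.le_card_sdiff ({N₁, N₂, N₃} : Finset Sub) T
      omega
    obtain ⟨N₄, hN₄⟩ := Finset.card_pos.mp hsd
    rw [Finset.mem_sdiff] at hN₄
    obtain ⟨hN₄T, hN₄n⟩ := hN₄
    simp only [Finset.mem_insert, Finset.mem_singleton, not_or] at hN₄n
    obtain ⟨hn14, hn24, hn34⟩ := hN₄n
    rw [hmemT] at hN₄T
    exact hno4 ⟨P₀, hP₀, N₁, hN₁S, N₂, hN₂S, N₃, hN₃S, N₄, hN₄T.1,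
      hn12, hn13, fun e => hn14 e.symm, hn23, fun e => hn24 e.symm, fun e => hn34 e.symm,
      hPN₁, hPN₂, hPN₃, hN₄T.2⟩
  set D : Finset Sub := S \ T with hD
  have hmemD : ∀ L : Sub, L ∈ D ↔ L ∈ S ∧ ¬ P₀ ≤ L := by
    intro L
    rw [hD, Finset.mem_sdiff, hmemT]
    tauto
  have hDcard : D.card = 2 := by
    rw [hD, Finset.card_sdiff_of_subset (Finset.filter_subset _ _), ← hT, hTcard, hcard]
  have hkey : ∀ (Ma Mb Mc : Sub), Ma ∈ S → Mb ∈ S → Mc ∈ S →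
      Ma ≠ Mb → Ma ≠ Mc → Mb ≠ Mc → ∀ R : Sub, finrank F R = 1 →
      R ≤ Ma → R ≤ Mb → R ≤ Mc → R = P₀ := by
    intro Ma Mb Mc ha hb hc hab hac hbc R hR h1 h2 h3
    exact huniq R ⟨hR, Ma, ha, Mb, hb, Mc, hc, hab, hac, hbc, h1, h2, h3⟩
  have hTD : ∀ x : Sub, x ∈ T → ∀ y : Sub, y ∈ D → x ≠ y := by
    intro x hx y hy e
    rw [hmemT] at hx; rw [hmemD] at hy
    exact hy.2 (e ▸ hx.2)
  -- the non-concurrency condition for elements built from T and D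
  have hnd : ∀ d e : Sub, d ∈ D → e ∈ D → d ≠ e → ∀ x : Sub, x ∈ T → ¬ d ⊓ x ≤ e := by
    intro d e hdD heD hde x hxT hle
    have hxS := ((hmemT x).mp hxT).1
    have hPx := ((hmemT x).mp hxT).2
    have hdS := ((hmemD d).mp hdD).1
    have hPd := ((hmemD d).mp hdD).2
    have heS := ((hmemD e).mp heD).1
    have hdx : d ≠ x := fun h => hPd (h ▸ hPx)
    have hinf : finrank F (d ⊓ x : Sub) = 1 :=
      finrank_inf_lines (hrk d hdS) (hrk x hxS) hdx
    have heq : d ⊓ x = P₀ := hkey x d e hxS hdS heS hdx.symm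
      (fun h => (hTD x hxT e heD) h) hde (d ⊓ x) hinf inf_le_right inf_le_left hle
    exact hPd (heq ▸ inf_le_left)
  -- facts about any element of the fiber
  have hfacts : ∀ w : {a : Cfg F // toSet a = S},
      w.1.1.1.1.1.1.1 = P₀ ∧
      (w.1.1.1.1.1.1.2 ∈ T ∧ w.1.1.1.1.1.2 ∈ T ∧ w.1.1.1.1.2 ∈ T) ∧
      (w.1.1.1.2 ∈ D ∧ w.1.1.2 ∈ D) ∧
      (w.1.1.1.1.1.2 ≠ w.1.1.1.1.1.1.2 ∧ w.1.1.1.1.2 ≠ w.1.1.1.1.1.1.2 ∧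
        w.1.1.1.1.2 ≠ w.1.1.1.1.1.2 ∧ w.1.1.2 ≠ w.1.1.1.2) := by
    rintro ⟨⟨⟨⟨⟨⟨⟨P', L₁⟩, L₂⟩, L₃⟩, L₄⟩, L₅⟩, hcond⟩, hset⟩
    obtain ⟨⟨⟨⟨⟨hP', hr1, hP'1⟩, ⟨hr2, hP'2⟩, hne21⟩, ⟨hr3, hP'3⟩, hne31, hne32⟩,
      hr4, hP'4⟩, hr5, hP'5, hq1, hq2, hq3⟩ := hcond
    have hmem : ∀ M : Sub, M ∈ ({L₁, L₂, L₃, L₄, L₅} : Finset Sub) → M ∈ S := by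
      intro M hM; rwa [← hset]
    have hPeq : P' = P₀ := hkey L₁ L₂ L₃ (hmem _ (by simp)) (hmem _ (by simp))
      (hmem _ (by simp)) (fun h => hne21 h.symm) (fun h => hne31 h.symm)
      (fun h => hne32 h.symm) P' hP' hP'1 hP'2 hP'3
    subst hPeq
    have hne54 : L₅ ≠ L₄ := fun h => hq1 (h ▸ inf_le_left)
    exact ⟨rfl,
      ⟨(hmemT L₁).mpr ⟨hmem _ (by simp), hP'1⟩, (hmemT L₂).mpr ⟨hmem _ (by simp), hP'2⟩,
        (hmemT L₃).mpr ⟨hmem _ (by simp), hP'3⟩⟩,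
      ⟨(hmemD L₄).mpr ⟨hmem _ (by simp), hP'4⟩, (hmemD L₅).mpr ⟨hmem _ (by simp), hP'5⟩⟩,
      hne21, hne31, hne32, hne54⟩
  -- conditions for the inverse construction
  have hrkT : ∀ x : ↥T, finrank F (x : Sub) = 2 := fun x => hrk _ ((hmemT _).mp x.2).1
  have hleT : ∀ x : ↥T, P₀ ≤ (x : Sub) := fun x => ((hmemT _).mp x.2).2
  have hrkD : ∀ x : ↥D, finrank F (x : Sub) = 2 := fun x => hrk _ ((hmemD _).mp x.2).1
  have hleD : ∀ x : ↥D, ¬ P₀ ≤ (x : Sub) := fun x => ((hmemD _).mp x.2).2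
  have hcondT : ∀ (a b c : ↥T) (d e : ↥D), (b : Sub) ≠ a → (c : Sub) ≠ a → (c : Sub) ≠ b →
      (e : Sub) ≠ d →
      Lvl5 F (((((P₀ : Sub), (a : Sub)), (b : Sub)), (c : Sub)), (d : Sub)) ∧
        R5 F (((((P₀ : Sub), (a : Sub)), (b : Sub)), (c : Sub)), (d : Sub)) (e : Sub) := by
    intro a b c d e hba hca hcb hed
    refine ⟨⟨⟨⟨⟨hP₀, hrkT a, hleT a⟩, ⟨hrkT b, hleT b⟩, hba⟩,
      ⟨hrkT c, hleT c⟩, hca, hcb⟩, hrkD d, hleD d⟩,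
      hrkD e, hleD e, ?_, ?_, ?_⟩
    · exact hnd d e d.2 e.2 (fun h => hed h.symm) a a.2
    · exact hnd d e d.2 e.2 (fun h => hed h.symm) b b.2
    · exact hnd d e d.2 e.2 (fun h => hed h.symm) c c.2
  have hsetT : ∀ (a b c : ↥T) (d e : ↥D), (b : Sub) ≠ a → (c : Sub) ≠ a → (c : Sub) ≠ b →
      (e : Sub) ≠ d →
      ({(a : Sub), (b : Sub), (c : Sub), (d : Sub), (e : Sub)} : Finset Sub) = S := by
    intro a b c d e hba hca hcb hed
    have hsub : ({(a : Sub), (b : Sub), (c : Sub), (d : Sub), (e : Sub)} : Finset Sub) ⊆ S := by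
      intro M hM
      simp only [Finset.mem_insert, Finset.mem_singleton] at hM
      rcases hM with rfl | rfl | rfl | rfl | rfl
      · exact ((hmemT _).mp a.2).1
      · exact ((hmemT _).mp b.2).1
      · exact ((hmemT _).mp c.2).1
      · exact ((hmemD _).mp d.2).1
      · exact ((hmemD _).mp e.2).1
    have had : (a : Sub) ≠ d := hTD _ a.2 _ d.2
    have hae : (a : Sub) ≠ e := hTD _ a.2 _ e.2
    have hbd : (b : Sub) ≠ d := hTD _ b.2 _ d.2
    have hbe : (b : Sub) ≠ e := hTD _ b.2 _ e.2
    have hcd : (c : Sub) ≠ d := hTD _ c.2 _ d.2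
    have hce : (c : Sub) ≠ e := hTD _ c.2 _ e.2
    have hc5 : ({(a : Sub), (b : Sub), (c : Sub), (d : Sub), (e : Sub)} : Finset Sub).card
        = 5 := by
      rw [Finset.card_insert_of_notMem (by simp [hba.symm, hca.symm, had, hae]),
        Finset.card_insert_of_notMem (by simp [hcb.symm, hbd, hbe]),
        Finset.card_insert_of_notMem (by simp [hcd, hce]),
        Finset.card_insert_of_notMem (by simp [hed.symm]), Finset.card_singleton]
    exact Finset.eq_of_subset_of_card_le hsub (by omega)
  -- the equivalence with ordered triples from T and ordered pairs from D
  have e : {a : Cfg F // toSet a = S} ≃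
      ({z : (↥T × ↥T) × ↥T // (True ∧ z.1.2 ≠ z.1.1) ∧ (z.2 ≠ z.1.1 ∧ z.2 ≠ z.1.2)} ×
       {z : ↥D × ↥D // True ∧ z.2 ≠ z.1}) :=
    { toFun := fun w =>
        (⟨((⟨w.1.1.1.1.1.1.2, (hfacts w).2.1.1⟩, ⟨w.1.1.1.1.1.2, (hfacts w).2.1.2.1⟩),
            ⟨w.1.1.1.1.2, (hfacts w).2.1.2.2⟩),
          ⟨trivial, fun h => (hfacts w).2.2.2.1 (congrArg Subtype.val h)⟩,
          fun h => (hfacts w).2.2.2.2.1 (congrArg Subtype.val h),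
          fun h => (hfacts w).2.2.2.2.2.1 (congrArg Subtype.val h)⟩,
         ⟨(⟨w.1.1.1.2, (hfacts w).2.2.1.1⟩, ⟨w.1.1.2, (hfacts w).2.2.1.2⟩),
          trivial, fun h => (hfacts w).2.2.2.2.2.2 (congrArg Subtype.val h)⟩)
      invFun := fun z =>
        ⟨⟨⟨((((P₀, (z.1.1.1.1 : Sub)), (z.1.1.1.2 : Sub)), (z.1.1.2 : Sub)), (z.2.1.1 : Sub)),
            (z.2.1.2 : Sub)⟩,
          hcondT z.1.1.1.1 z.1.1.1.2 z.1.1.2 z.2.1.1 z.2.1.2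
            (fun h => z.1.2.1.2 (Subtype.ext h)) (fun h => z.1.2.2.1 (Subtype.ext h))
            (fun h => z.1.2.2.2 (Subtype.ext h)) (fun h => z.2.2.2 (Subtype.ext h))⟩,
          hsetT z.1.1.1.1 z.1.1.1.2 z.1.1.2 z.2.1.1 z.2.1.2
            (fun h => z.1.2.1.2 (Subtype.ext h)) (fun h => z.1.2.2.1 (Subtype.ext h))
            (fun h => z.1.2.2.2 (Subtype.ext h)) (fun h => z.2.2.2 (Subtype.ext h))⟩
      left_inv := fun w => by
        obtain ⟨⟨⟨⟨⟨⟨⟨P', L₁⟩, L₂⟩, L₃⟩, L₄⟩, L₅⟩, hcond⟩, hset⟩ := w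
        have hPeq : P' = P₀ := (hfacts ⟨⟨(((((P', L₁), L₂), L₃), L₄), L₅), hcond⟩, hset⟩).1
        apply Subtype.ext
        apply Subtype.ext
        show (((((P₀, L₁), L₂), L₃), L₄), L₅) = (((((P', L₁), L₂), L₃), L₄), L₅)
        rw [hPeq]
      right_inv := fun z => by
        obtain ⟨⟨⟨⟨a, b⟩, c⟩, hz1⟩, ⟨⟨d, e⟩, hz2⟩⟩ := z
        rfl }
  rw [Nat.card_congr e, Nat.card_prod, card_ordered_triples, card_ordered_pairs,
    Fintype.card_coe, Fintype.card_coe, hTcard, hDcard]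
end fiber
section final
variable {F : Type} [Field F] [Fintype F]
local notation "q" => Fintype.card F
local notation "Sub" => Submodule F (Fin 3 → F)

lemma toSet_spec (a : Cfg F) :
    (toSet a).card = 5 ∧ (∀ L ∈ toSet a, finrank F L = 2) ∧
      (∃! P : Sub, finrank F P = 1 ∧
        ∃ L₁ ∈ toSet a, ∃ L₂ ∈ toSet a, ∃ L₃ ∈ toSet a,
          L₁ ≠ L₂ ∧ L₁ ≠ L₃ ∧ L₂ ≠ L₃ ∧ P ≤ L₁ ∧ P ≤ L₂ ∧ P ≤ L₃) ∧
      ¬∃ P : Sub, finrank F P = 1 ∧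
        ∃ L₁ ∈ toSet a, ∃ L₂ ∈ toSet a, ∃ L₃ ∈ toSet a, ∃ L₄ ∈ toSet a,
          L₁ ≠ L₂ ∧ L₁ ≠ L₃ ∧ L₁ ≠ L₄ ∧ L₂ ≠ L₃ ∧ L₂ ≠ L₄ ∧ L₃ ≠ L₄ ∧
          P ≤ L₁ ∧ P ≤ L₂ ∧ P ≤ L₃ ∧ P ≤ L₄ := by
  obtain ⟨⟨⟨⟨⟨⟨P', L₁⟩, L₂⟩, L₃⟩, L₄⟩, L₅⟩, hcond⟩ := a
  obtain ⟨⟨⟨⟨⟨hP', hr1, hP'1⟩, ⟨hr2, hP'2⟩, hne21⟩, ⟨hr3, hP'3⟩, hne31, hne32⟩,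
    hr4, hP'4⟩, hr5, hP'5, hq1, hq2, hq3⟩ := hcond
  exact main_spec hP' hr1 hr2 hr3 hr4 hr5 hP'1 hP'2 hP'3 hne21 hne31 hne32 hP'4 hP'5
    hq1 hq2 hq3

lemma twelve_mul_card :
    Nat.card (Cfg F) = 12 * Nat.card {S : Finset Sub // S.card = 5 ∧
      (∀ L ∈ S, finrank F L = 2) ∧
      (∃! P : Sub, finrank F P = 1 ∧
        ∃ L₁ ∈ S, ∃ L₂ ∈ S, ∃ L₃ ∈ S,
          L₁ ≠ L₂ ∧ L₁ ≠ L₃ ∧ L₂ ≠ L₃ ∧ P ≤ L₁ ∧ P ≤ L₂ ∧ P ≤ L₃) ∧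
      ¬∃ P : Sub, finrank F P = 1 ∧
        ∃ L₁ ∈ S, ∃ L₂ ∈ S, ∃ L₃ ∈ S, ∃ L₄ ∈ S,
          L₁ ≠ L₂ ∧ L₁ ≠ L₃ ∧ L₁ ≠ L₄ ∧ L₂ ≠ L₃ ∧ L₂ ≠ L₄ ∧ L₃ ≠ L₄ ∧
          P ≤ L₁ ∧ P ≤ L₂ ∧ P ≤ L₃ ∧ P ≤ L₄} := by
  classical
  letI : Fintype Sub := Fintype.ofFinite _
  letI : Finite (Cfg F) := Subtype.finite
  letI : Fintype (Cfg F) := Fintype.ofFinite _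
  refine card_of_fibers (fun a => ⟨toSet a, toSet_spec a⟩) 12 ?_
  rintro ⟨S, hS⟩
  refine Eq.trans (Nat.card_congr (?_ : _ ≃ {a : Cfg F // toSet a = S}))
    (fiber_card S hS.1 hS.2.1 hS.2.2.1 hS.2.2.2)
  exact Equiv.subtypeEquivRight (fun a => by rw [Subtype.ext_iff])
end final

open scoped Classical

/-- Let `q` be a prime power.  The number of 5-element sets of lines in
`ℙ²` over `𝔽_q` (lines being 2-dimensional linear subspaces of `𝔽_q³`, points being
1-dimensional subspaces) such that there is exactly one point lying on three of the five
lines and no point lies on four or more of the lines equals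
`(1/12)·(q−2)·q³·(q³−1)·(q²−1)`. -/
theorem card_five_lines_one_triple_point (q : ℕ) (hq : IsPrimePow q)
    (F : Type) [Field F] [Fintype F] (hF : Fintype.card F = q) :
    (Nat.card {S : Finset (Submodule F (Fin 3 → F)) //
        S.card = 5 ∧ (∀ L ∈ S, Module.finrank F L = 2) ∧
        (∃! P : Submodule F (Fin 3 → F), Module.finrank F P = 1 ∧
          ∃ L₁ ∈ S, ∃ L₂ ∈ S, ∃ L₃ ∈ S, L₁ ≠ L₂ ∧ L₁ ≠ L₃ ∧ L₂ ≠ L₃ ∧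
            P ≤ L₁ ∧ P ≤ L₂ ∧ P ≤ L₃) ∧
        ¬∃ P : Submodule F (Fin 3 → F), Module.finrank F P = 1 ∧
          ∃ L₁ ∈ S, ∃ L₂ ∈ S, ∃ L₃ ∈ S, ∃ L₄ ∈ S,
            L₁ ≠ L₂ ∧ L₁ ≠ L₃ ∧ L₁ ≠ L₄ ∧ L₂ ≠ L₃ ∧ L₂ ≠ L₄ ∧ L₃ ≠ L₄ ∧
            P ≤ L₁ ∧ P ≤ L₂ ∧ P ≤ L₃ ∧ P ≤ L₄} : ℚ) =
    (1 / 12 : ℚ) * ((q : ℚ) - 2) *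
      ((q : ℚ) ^ 3 * ((q : ℚ) ^ 3 - 1) * ((q : ℚ) ^ 2 - 1)) := by
  subst hF
  have hq2 : 2 ≤ Fintype.card F := Fintype.one_lt_card
  have h12 := twelve_mul_card (F := F)
  have hN := card_Cfg F hq2
  rw [h12] at hN
  have hcast := congrArg (Nat.cast : ℕ → ℚ) hN
  push_cast [Nat.cast_sub (show 1 ≤ Fintype.card F by omega),
    Nat.cast_sub (show 2 ≤ Fintype.card F by omega)] at hcast
  linear_combination hcast / 12
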